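/- Let V be an n-dimensional vector space over a field with basis e_1,...,e_n, and let M_i denote the span of e_1,...,e_i. Let F ⊆ E be subspaces of V with dim F = k and dim E = k + 1. If F ∩ M_{n−k} ≠ 0 and E ∩ M_{n−k−1} ≠ 0, then F ∩ M_{n−k−1} ≠ 0 or dim(E ∩ M_{n−k}) ≥ 2. -/

import Mathlib

theorem schubert_divisor_product_flag
    {K V : Type*} [Field K] [AddCommGroup V] [Module K V]
    (n k : ℕ) (hk : k + 1 ≤ n) (e : Module.Basis (Fin n) K V)
    (F E : Submodule K V) (hFE : F ≤ E)
    (hF : Module.finrank K F = k) (hE : Module.finrank K E = k + 1)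
    (h1 : F ⊓ Submodule.span K (⇑e '' {j : Fin n | (j : ℕ) < n - k}) ≠ ⊥)
    (h2 : E ⊓ Submodule.span K (⇑e '' {j : Fin n | (j : ℕ) < n - k - 1}) ≠ ⊥) :
    F ⊓ Submodule.span K (⇑e '' {j : Fin n | (j : ℕ) < n - k - 1}) ≠ ⊥ ∨
    2 ≤ Module.finrank K
      ↥(E ⊓ Submodule.span K (⇑e '' {j : Fin n | (j : ℕ) < n - k})) := by
  haveI : FiniteDimensional K V := Module.Finite.of_basis e
  set S1 := Submodule.span K (⇑e '' {j : Fin n | (j : ℕ) < n - k - 1}) with hS1def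
  set S2 := Submodule.span K (⇑e '' {j : Fin n | (j : ℕ) < n - k}) with hS2def
  have hS : S1 ≤ S2 := by
    apply Submodule.span_mono
    apply Set.image_mono
    intro j hj
    exact lt_of_lt_of_le hj (Nat.sub_le_sub_left (Nat.le_succ k) n)
  rw [or_iff_not_imp_left]
  intro h3
  push_neg at h3
  obtain ⟨x, hx, hx0⟩ := Submodule.exists_mem_ne_zero_of_ne_bot h1
  obtain ⟨y, hy, hy0⟩ := Submodule.exists_mem_ne_zero_of_ne_bot h2
  have hxF : x ∈ F := hx.1
  have hxS2 : x ∈ S2 := hx.2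
  have hyE : y ∈ E := hy.1
  have hyS1 : y ∈ S1 := hy.2
  have hxW : x ∈ E ⊓ S2 := ⟨hFE hxF, hxS2⟩
  have hyW : y ∈ E ⊓ S2 := ⟨hyE, hS hyS1⟩
  have hxnotS1 : x ∉ S1 := by
    intro hxs
    exact hx0 ((Submodule.eq_bot_iff _).mp h3 x ⟨hxF, hxs⟩)
  have hindep : LinearIndependent K ![x, y] := by
    rw [LinearIndependent.pair_iff]
    intro s t hst
    by_cases hs : s = 0
    · subst hs
      simp only [zero_smul, zero_add] at hst
      exact ⟨rfl, by rcases smul_eq_zero.mp hst with h | h; exact h; exact absurd h hy0⟩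
    · exfalso
      apply hxnotS1
      have : x = (-s⁻¹ * t) • y := by
        have : s • x = -(t • y) := by linear_combination (norm := module) hst
        calc x = s⁻¹ • (s • x) := by rw [smul_smul, inv_mul_cancel₀ hs, one_smul]
        _ = s⁻¹ • (-(t • y)) := by rw [this]
        _ = (-s⁻¹ * t) • y := by rw [smul_neg, smul_smul]; module
      rw [this]
      exact Submodule.smul_mem _ _ hyS1
  have hspan : Submodule.span K (Set.range ![x, y]) ≤ E ⊓ S2 := by
    rw [Submodule.span_le]
    intro z hz
    rcases hz with ⟨i, rfl⟩
    fin_cases i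
    · exact hxW
    · exact hyW
  calc 2 = Module.finrank K (Submodule.span K (Set.range ![x, y])) := by
        rw [finrank_span_eq_card hindep]; simp
    _ ≤ Module.finrank K ↥(E ⊓ S2) := Submodule.finrank_mono hspan
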